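/- For every n ≥ 1 and every x, Σ_k W_{n,k}·x^k = Σ_{i=0}^{n−1} C(n−1, i) · (1−x²)^{n−1−i} · x^i · Π_{j=1}^{i} (x+j), where W_{n,k} is the number of permutations in Sₙ at prefix exchange distance k. -/

import Mathlib

open Equiv Finset Filter
open scoped Classical

noncomputable section

/-- Number of fixed points of a permutation. -/
def c1 {n : ℕ} (π : Equiv.Perm (Fin n)) : ℕ :=
  (Finset.univ.filter fun i => π i = i).card

/-- Number of cycles of length at least 2 of a permutation. -/
def c2 {n : ℕ} (π : Equiv.Perm (Fin n)) : ℕ := π.cycleType.card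

/-- The prefix exchange distance, given by the Akers–Krishnamurthy formula. -/
def pexc {n : ℕ} (π : Equiv.Perm (Fin n)) : ℕ :=
  n + c2 π - c1 π - (if ∀ i : Fin n, (i : ℕ) = 0 → π i = i then 0 else 2)

/-- Whitney numbers of the second kind for the star poset. -/
def W (n k : ℕ) : ℕ :=
  (Finset.univ.filter fun π : Equiv.Perm (Fin n) => pexc π = k).card

set_option linter.unusedSectionVars false

variable {α β : Type*} [Fintype α] [DecidableEq α] [Fintype β] [DecidableEq β]



/-- star statistic: support size + number of nontrivial cycles - penalty. -/
def st (z : α) (π : Equiv.Perm α) : ℕ :=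
  π.support.card + π.cycleType.card - (if π z = z then 0 else 2)

/-- embedding of α into the isSome subtype of Option α -/
def someEquiv (α : Type*) : α ≃ {x : Option α // x.isSome} where
  toFun a := ⟨some a, rfl⟩
  invFun x := x.1.get x.2
  left_inv a := rfl
  right_inv x := by cases x with
    | mk v h => cases v with
      | none => simp at h
      | some a => rfl

theorem optionCongr_eq_extendDomain (σ : Perm α) :
    (σ.optionCongr : Perm (Option α)) = σ.extendDomain (someEquiv α) := by
  apply Equiv.ext
  intro x
  cases x with
  | none =>
    rw [Equiv.Perm.extendDomain_apply_not_subtype]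
    · rfl
    · simp
  | some a =>
    have : (σ.extendDomain (someEquiv α)) ((someEquiv α) a) = (someEquiv α) (σ a) :=
      Equiv.Perm.extendDomain_apply_image σ (someEquiv α) a
    simpa [someEquiv] using this.symm

theorem cycleType_optionCongr (σ : Perm α) :
    Equiv.Perm.cycleType (σ.optionCongr : Perm (Option α)) = σ.cycleType := by
  rw [optionCongr_eq_extendDomain, Equiv.Perm.cycleType_extendDomain]

theorem card_support_optionCongr (σ : Perm α) :
    (Equiv.Perm.support (σ.optionCongr : Perm (Option α))).card = σ.support.card := by
  rw [optionCongr_eq_extendDomain, Equiv.Perm.card_support_extend_domain]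


def univSub (e : α ≃ β) : α ≃ {b : β // (fun _ => True) b} :=
  e.trans (Equiv.subtypeUnivEquiv (fun _ => trivial)).symm

theorem permCongr_eq_extendDomain (e : α ≃ β) (π : Perm α) :
    e.permCongr π = π.extendDomain (univSub e) := by
  apply Equiv.ext
  intro b
  have hb : (fun _ : β => True) b := trivial
  rw [Equiv.Perm.extendDomain_apply_subtype _ _ hb]
  simp [univSub, Equiv.permCongr_apply, Equiv.subtypeUnivEquiv]

theorem st_permCongr (e : α ≃ β) (z : α) (π : Perm α) :
    st (e z) (e.permCongr π) = st z π := by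
  unfold st
  rw [permCongr_eq_extendDomain, Equiv.Perm.cycleType_extendDomain,
    Equiv.Perm.card_support_extend_domain]
  congr 1
  have : (π.extendDomain (univSub e)) (e z) = e (π z) := by
    rw [← permCongr_eq_extendDomain]; simp [Equiv.permCongr_apply]
  rw [this]
  simp [EmbeddingLike.apply_eq_iff_eq]

theorem st_conj (u σ : Perm α) (z : α) :
    st (u z) (u * σ * u⁻¹) = st z σ := by
  unfold st
  rw [Equiv.Perm.cycleType_conj, Equiv.Perm.card_support_conj]
  congr 1
  have : (u * σ * u⁻¹) (u z) = u (σ z) := by simp [Equiv.Perm.mul_apply]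
  rw [this]
  simp [EmbeddingLike.apply_eq_iff_eq]


theorem optionCongr_mul (c ρ : Perm α) :
    ((c * ρ).optionCongr : Perm (Option α)) = c.optionCongr * ρ.optionCongr := by
  apply Equiv.ext; intro x; cases x <;> simp [Equiv.Perm.mul_apply]

theorem tau_apply_none (σ : Perm α) (a : α) :
    (swap none (some a) * σ.optionCongr : Perm (Option α)) none = some a := by
  simp [Equiv.Perm.mul_apply]

theorem tau_apply_some (σ : Perm α) (a b : α) :
    (swap none (some a) * σ.optionCongr : Perm (Option α)) (some b)
      = if σ b = a then none else some (σ b) := by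
  by_cases h : σ b = a
  · simp [Equiv.Perm.mul_apply, h]
  · simp [Equiv.Perm.mul_apply, h, swap_apply_of_ne_of_ne, Option.some_ne_none,
      (Option.some_injective α).ne_iff.2 h]

theorem isCycle_insert (c : Perm α) (a : α) (hc : c.IsCycle) (hca : c a ≠ a) :
    Equiv.Perm.IsCycle (swap none (some a) * c.optionCongr : Perm (Option α)) := by
  set κ : Perm (Option α) := swap none (some a) * c.optionCongr with hκ
  have hnone : κ none = some a := tau_apply_none c a
  have hsome : ∀ b, κ (some b) = if c b = a then none else some (c b) := tau_apply_some c a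
  have key : ∀ k : ℕ, κ.SameCycle none (some ((c ^ k) a)) := by
    intro k
    induction k with
    | zero =>
      simpa [hnone] using (Equiv.Perm.sameCycle_apply_right (f := κ) (x := none) (y := none)).2
        Equiv.Perm.SameCycle.rfl
    | succ k ih =>
      have hstep : (c ^ (k + 1)) a = c ((c ^ k) a) := by
        rw [pow_succ']; rfl
      by_cases h : c ((c ^ k) a) = a
      · rw [hstep, h]
        simpa [hnone] using (Equiv.Perm.sameCycle_apply_right (f := κ) (x := none) (y := none)).2
          Equiv.Perm.SameCycle.rfl
      · have : κ (some ((c ^ k) a)) = some ((c ^ (k+1)) a) := by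
          rw [hsome, if_neg h, hstep]
        rw [← this]
        exact Equiv.Perm.sameCycle_apply_right.2 ih
  refine ⟨none, by simp [hnone], ?_⟩
  intro y hy
  cases y with
  | none => exact Equiv.Perm.SameCycle.rfl
  | some b =>
    have hb : c b ≠ b := by
      intro hfix
      by_cases h : c b = a
      · have hba : b = a := by rw [← h, hfix]
        exact hca (by rw [← hba]; rw [hfix])
      · exact hy (by rw [hsome, if_neg h, hfix])
    have hsc : c.SameCycle a b := hc.sameCycle hca hb
    obtain ⟨k, _, hk⟩ := hsc.exists_pow_eq'
    rw [← hk]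
    exact key k

theorem cycleOf_decomp (σ : Perm α) (a : α) (ha : σ a ≠ a) :
    σ = σ.cycleOf a * ((σ.cycleOf a)⁻¹ * σ)
    ∧ Equiv.Perm.Disjoint (σ.cycleOf a) ((σ.cycleOf a)⁻¹ * σ) := by
  constructor
  · group
  · intro x
    by_cases h : σ.SameCycle a x
    · right
      have hcx : σ.cycleOf a x = σ x := h.cycleOf_apply
      rw [Equiv.Perm.mul_apply, ← hcx, (show ∀ y, (σ.cycleOf a)⁻¹ (σ.cycleOf a y) = y from fun y => Equiv.Perm.inv_eq_iff_eq.mpr rfl)]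
    · left
      exact Equiv.Perm.cycleOf_apply_of_not_sameCycle h

theorem card_cycleType_insert (σ : Perm α) (a : α) (ha : σ a ≠ a) :
    (Equiv.Perm.cycleType (swap none (some a) * σ.optionCongr : Perm (Option α))).card
      = σ.cycleType.card := by
  obtain ⟨hdecomp, hdisj⟩ := cycleOf_decomp σ a ha
  set c := σ.cycleOf a with hc
  set ρ := c⁻¹ * σ with hρ
  have hccyc : c.IsCycle := Equiv.Perm.isCycle_cycleOf σ ha
  have hca : c a ≠ a := by
    rw [hc, Equiv.Perm.cycleOf_apply_self]; exact ha
  -- σ side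
  have hσct : σ.cycleType.card = 1 + ρ.cycleType.card := by
    conv_lhs => rw [hdecomp]
    rw [hdisj.cycleType_mul, hccyc.cycleType]
    simp [add_comm]
  -- τ side
  have hτ : (swap none (some a) * σ.optionCongr : Perm (Option α))
      = (swap none (some a) * c.optionCongr) * ρ.optionCongr := by
    rw [mul_assoc, ← optionCongr_mul, ← hdecomp]
  have hκcyc : Equiv.Perm.IsCycle (swap none (some a) * c.optionCongr : Perm (Option α)) :=
    isCycle_insert c a hccyc hca
  have hκdisj : Equiv.Perm.Disjoint (swap none (some a) * c.optionCongr : Perm (Option α))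
      ρ.optionCongr := by
    intro x
    cases x with
    | none => right; rfl
    | some b =>
      by_cases hb : ρ b = b
      · right; simp [hb]
      · left
        have hcb : c b = b := (hdisj b).resolve_right hb
        have hba : b ≠ a := by
          intro h; rw [h] at hcb; exact hca hcb
        rw [tau_apply_some]
        rw [hcb, if_neg hba]
  rw [hτ, hκdisj.cycleType_mul, hκcyc.cycleType, cycleType_optionCongr, hσct]
  simp [add_comm]

theorem card_cycleType_swapcase (σ : Perm α) (a : α) (ha : σ a = a) :
    (Equiv.Perm.cycleType (swap none (some a) * σ.optionCongr : Perm (Option α))).card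
      = σ.cycleType.card + 1 := by
  have hdisj : Equiv.Perm.Disjoint (swap none (some a) : Perm (Option α)) σ.optionCongr := by
    intro x
    cases x with
    | none => right; rfl
    | some b =>
      by_cases hb : b = a
      · right; subst hb; simp [ha]
      · left
        exact swap_apply_of_ne_of_ne (by simp) (by simpa using hb)
  have hcyc : Equiv.Perm.IsCycle (swap none (some a) : Perm (Option α)) :=
    Equiv.Perm.isCycle_swap (by simp)
  rw [hdisj.cycleType_mul, hcyc.cycleType, cycleType_optionCongr]
  simp [add_comm]

theorem sigma_ne_of_eq_a {σ : Perm α} {a b : α} (ha : σ a ≠ a) (h : σ b = a) : σ b ≠ b := by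
  intro hbb
  rw [hbb] at h
  subst h
  exact ha hbb

theorem mem_support_ins_case (σ : Perm α) (a : α) (ha : σ a ≠ a) (b : α) :
    ((swap none (some a) * σ.optionCongr : Perm (Option α)) (some b) ≠ some b) ↔ σ b ≠ b := by
  rw [tau_apply_some]
  by_cases h : σ b = a
  · rw [if_pos h]
    simp only [ne_eq, iff_true]
    · constructor
      · intro _; exact sigma_ne_of_eq_a ha h
      · intro _; simp
  · rw [if_neg h]
    simp

theorem support_ins_case (σ : Perm α) (a : α) (ha : σ a ≠ a) :
    (swap none (some a) * σ.optionCongr : Perm (Option α)).support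
      = insert none (σ.support.map Function.Embedding.some) := by
  ext x
  cases x with
  | none =>
    simp only [Equiv.Perm.mem_support, tau_apply_none, Finset.mem_insert]
    simp
  | some b =>
    simp only [Equiv.Perm.mem_support, mem_support_ins_case σ a ha b, Finset.mem_insert,
      Finset.mem_map, Function.Embedding.some_apply, Option.some.injEq]
    constructor
    · intro hb
      right
      exact ⟨b, hb, rfl⟩
    · rintro (h1 | ⟨y, hy, rfl⟩)
      · exact absurd h1 (by simp)
      · exact hy

theorem card_support_ins_case (σ : Perm α) (a : α) (ha : σ a ≠ a) :
    (swap none (some a) * σ.optionCongr : Perm (Option α)).support.card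
      = σ.support.card + 1 := by
  rw [support_ins_case σ a ha, Finset.card_insert_of_notMem (by simp), Finset.card_map]

theorem support_swp_case (σ : Perm α) (a : α) (ha : σ a = a) :
    (swap none (some a) * σ.optionCongr : Perm (Option α)).support
      = insert none (insert (some a) (σ.support.map Function.Embedding.some)) := by
  ext x
  cases x with
  | none =>
    simp only [Equiv.Perm.mem_support, tau_apply_none, Finset.mem_insert]
    simp
  | some b =>
    simp only [Equiv.Perm.mem_support, tau_apply_some, Finset.mem_insert,
      Finset.mem_map, Function.Embedding.some_apply, Option.some.injEq]
    by_cases h : b = a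
    · subst h
      rw [if_pos ha]
      simp
    · have h2 : σ b ≠ a := fun hba => h (σ.injective (by rw [hba, ha]))
      rw [if_neg h2]
      constructor
      · intro hne
        right; right
        exact ⟨b, (fun hbb => hne (by rw [hbb])), rfl⟩
      · rintro (h1 | h1 | ⟨y, hy, rfl⟩)
        · exact absurd h1 (by simp)
        · exact absurd h1 h
        · intro hc
          exact hy (Option.some_injective α hc)

theorem card_support_swp_case (σ : Perm α) (a : α) (ha : σ a = a) :
    (swap none (some a) * σ.optionCongr : Perm (Option α)).support.card
      = σ.support.card + 2 := by
  have hnm : (some a : Option α) ∉ σ.support.map Function.Embedding.some := by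
    simp only [Finset.mem_map, Function.Embedding.some_apply, Option.some.injEq, not_exists]
    rintro y ⟨hy, hya⟩
    subst hya
    exact (Equiv.Perm.mem_support.1 hy) ha
  rw [support_swp_case σ a ha, Finset.card_insert_of_notMem (by simp),
    Finset.card_insert_of_notMem hnm, Finset.card_map]

theorem tau_fix_iff (σ : Perm α) (a z : α) :
    ((swap none (some a) * σ.optionCongr : Perm (Option α)) (some z) = some z)
      ↔ (σ z = z ∧ z ≠ a) := by
  rw [tau_apply_some]
  by_cases h : σ z = a
  · rw [if_pos h]
    simp only [iff_false, (Option.some_ne_none z).symm, false_iff]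
    rintro ⟨h1, h2⟩
    exact h2 (by rw [← h, h1])
  · rw [if_neg h]
    simp only [Option.some.injEq]
    constructor
    · intro h1
      refine ⟨h1, fun hz => ?_⟩
      subst hz
      exact h h1
    · exact fun h1 => h1.1

theorem two_le_support_of_moved {σ : Perm α} {z : α} (hz : σ z ≠ z) :
    2 ≤ σ.support.card := by
  have h1 : σ ≠ 1 := fun h => hz (by rw [h]; rfl)
  exact Equiv.Perm.one_lt_card_support_of_ne_one h1

theorem st_none_case (σ : Perm α) (z : α) :
    st (some z) (σ.optionCongr : Perm (Option α)) = st z σ := by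
  unfold st
  rw [cycleType_optionCongr, card_support_optionCongr]
  congr 1
  have : (σ.optionCongr : Perm (Option α)) (some z) = some (σ z) := rfl
  rw [this]
  simp

theorem st_ins_case (σ : Perm α) (a z : α) (ha : σ a ≠ a) :
    st (some z) (swap none (some a) * σ.optionCongr : Perm (Option α)) = st z σ + 1 := by
  unfold st
  rw [card_cycleType_insert σ a ha, card_support_ins_case σ a ha]
  by_cases hz : σ z = z
  · have hza : z ≠ a := fun h => ha (h ▸ hz)
    rw [if_pos ((tau_fix_iff σ a z).2 ⟨hz, hza⟩), if_pos hz]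
    omega
  · have h2 : ¬(σ z = z ∧ z ≠ a) := fun h => hz h.1
    rw [if_neg (fun h => h2 ((tau_fix_iff σ a z).1 h)), if_neg hz]
    have := two_le_support_of_moved hz
    omega

theorem st_swp_case (σ : Perm α) (a z : α) (ha : σ a = a) :
    st (some z) (swap none (some a) * σ.optionCongr : Perm (Option α))
      = st z σ + (if a = z then 1 else 3) := by
  unfold st
  rw [card_cycleType_swapcase σ a ha, card_support_swp_case σ a ha]
  by_cases haz : a = z
  · subst haz
    rw [if_pos rfl]
    have h2 : ¬(σ a = a ∧ a ≠ a) := fun h => h.2 rfl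
    rw [if_neg (fun h => h2 ((tau_fix_iff σ a a).1 h)), if_pos ha]
    omega
  · rw [if_neg haz]
    by_cases hz : σ z = z
    · rw [if_pos ((tau_fix_iff σ a z).2 ⟨hz, fun h => haz h.symm⟩), if_pos hz]
      omega
    · have h2 : ¬(σ z = z ∧ z ≠ a) := fun h => hz h.1
      rw [if_neg (fun h => h2 ((tau_fix_iff σ a z).1 h)), if_neg hz]
      have := two_le_support_of_moved hz
      omega

/-- generating sum of the star statistic over all permutations -/
def SS (z : α) (x : ℝ) : ℝ := ∑ σ : Perm α, x ^ st z σ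

/-- restricted generating sum over permutations fixing `a` -/
def TT (z a : α) (x : ℝ) : ℝ := ∑ σ : Perm α, (if σ a = a then x ^ st z σ else 0)

theorem master (z : α) (x : ℝ) :
    SS (some z : Option α) x
      = (1 + (Fintype.card α : ℝ) * x) * SS z x
        + (x^3 - x) * ∑ a : α, (if a = z then 0 else TT z a x) := by
  have key : ∀ (a : α) (σ : Perm α),
      x ^ st (some z : Option α) (swap none (some a) * σ.optionCongr)
        = x ^ st z σ * (x + if σ a = a ∧ a ≠ z then x^3 - x else 0) := by
    intro a σ
    by_cases hfix : σ a = a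
    · by_cases haz : a = z
      · rw [st_swp_case σ a z hfix, if_pos haz,
          if_neg (fun h => h.2 haz), pow_succ]
        ring
      · rw [st_swp_case σ a z hfix, if_neg haz, if_pos ⟨hfix, haz⟩, pow_add]
        ring
    · rw [st_ins_case σ a z hfix, if_neg (fun h => hfix h.1), pow_succ]
      ring
  have step1 : SS (some z : Option α) x
      = ∑ p : Option α × Perm α, x ^ st (some z) (Equiv.Perm.decomposeOption.symm p) :=
    (Fintype.sum_equiv Equiv.Perm.decomposeOption.symm _ _ (fun p => rfl)).symm
  rw [step1, Fintype.sum_prod_type, Fintype.sum_option]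
  have hnone : ∀ σ : Perm α,
      (Equiv.Perm.decomposeOption.symm ((none : Option α), σ)) = (σ.optionCongr : Perm (Option α)) := by
    intro σ
    rw [Equiv.Perm.decomposeOption_symm_apply]
    simp [Equiv.swap_self]
    rfl
  have h1 : ∑ σ : Perm α, x ^ st (some z) (Equiv.Perm.decomposeOption.symm ((none : Option α), σ))
      = SS z x := by
    apply Finset.sum_congr rfl
    intro σ _
    rw [hnone σ, st_none_case]
  have h2 : ∀ a : α,
      ∑ σ : Perm α, x ^ st (some z) (Equiv.Perm.decomposeOption.symm (some a, σ))
        = x * SS z x + (if a = z then 0 else (x^3 - x) * TT z a x) := by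
    intro a
    have : ∀ σ : Perm α, x ^ st (some z) (Equiv.Perm.decomposeOption.symm (some a, σ))
        = x ^ st z σ * x + x ^ st z σ * (if σ a = a ∧ a ≠ z then x^3 - x else 0) := by
      intro σ
      rw [Equiv.Perm.decomposeOption_symm_apply, key a σ]
      ring
    rw [Finset.sum_congr rfl (fun σ _ => this σ), Finset.sum_add_distrib]
    congr 1
    · rw [← Finset.sum_mul]
      rw [mul_comm]
      rfl
    · by_cases haz : a = z
      · rw [if_pos haz]
        apply Finset.sum_eq_zero
        intro σ _
        rw [if_neg (fun h => h.2 haz), mul_zero]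
      · rw [if_neg haz, TT, Finset.mul_sum]
        apply Finset.sum_congr rfl
        intro σ _
        by_cases hfix : σ a = a
        · rw [if_pos ⟨hfix, haz⟩, if_pos hfix]; ring
        · rw [if_neg (fun h => hfix h.1), if_neg hfix, mul_zero, mul_zero]
  rw [h1, Finset.sum_congr rfl (fun a _ => h2 a), Finset.sum_add_distrib]
  rw [Finset.sum_const, Finset.card_univ]
  have : ∑ a : α, (if a = z then 0 else (x^3 - x) * TT z a x)
      = (x^3 - x) * ∑ a : α, (if a = z then 0 else TT z a x) := by
    rw [Finset.mul_sum]
    apply Finset.sum_congr rfl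
    intro a _
    by_cases haz : a = z
    · rw [if_pos haz, if_pos haz, mul_zero]
    · rw [if_neg haz, if_neg haz]
  rw [this]
  push_cast
  ring

theorem TT_indep (z a b : α) (haz : a ≠ z) (hbz : b ≠ z) (x : ℝ) :
    TT z a x = TT z b x := by
  by_cases hab : a = b
  · rw [hab]
  · unfold TT
    set u : Perm α := swap a b with hu
    have huz : u z = z := swap_apply_of_ne_of_ne (Ne.symm haz) (Ne.symm hbz)
    refine Fintype.sum_equiv ((Equiv.mulLeft u).trans (Equiv.mulRight u⁻¹)) _ _ ?_
    intro σ
    have happ : ((Equiv.mulLeft u).trans (Equiv.mulRight u⁻¹)) σ = u * σ * u⁻¹ := rfl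
    rw [happ]
    have hst : st z (u * σ * u⁻¹) = st z σ := by
      conv_lhs => rw [← huz]
      exact st_conj u σ z
    have hcond : (u * σ * u⁻¹) b = b ↔ σ a = a := by
      have h1 : u⁻¹ b = a := by rw [hu, swap_inv, swap_apply_right]
      rw [Equiv.Perm.mul_apply, Equiv.Perm.mul_apply, h1]
      constructor
      · intro h
        have h2 : u⁻¹ (u (σ a)) = u⁻¹ b := congrArg (fun y => u⁻¹ y) h
        rwa [(show ∀ y, u⁻¹ (u y) = y from fun y => Equiv.Perm.inv_eq_iff_eq.mpr rfl), h1] at h2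
      · intro h; rw [h, hu, swap_apply_left]
    by_cases hfix : σ a = a
    · rw [if_pos hfix, if_pos (hcond.2 hfix), hst]
    · rw [if_neg hfix, if_neg (fun h => hfix (hcond.1 h))]

theorem sum_TT (z b : α) (hbz : b ≠ z) (x : ℝ) :
    ∑ a : α, (if a = z then 0 else TT z a x)
      = ((Fintype.card α : ℝ) - 1) * TT z b x := by
  have h1 : ∀ a : α, (if a = z then 0 else TT z a x)
      = TT z b x - (if a = z then TT z b x else 0) := by
    intro a
    by_cases haz : a = z
    · rw [if_pos haz, if_pos haz]; ring
    · rw [if_neg haz, if_neg haz, TT_indep z a b haz hbz x]; ring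
  rw [Finset.sum_congr rfl (fun a _ => h1 a), Finset.sum_sub_distrib,
    Finset.sum_const, Finset.card_univ, Finset.sum_ite_eq' Finset.univ z]
  simp only [Finset.mem_univ, if_true]
  rw [nsmul_eq_mul]
  ring

theorem decomposeOption_symm_none (σ : Perm α) :
    (Equiv.Perm.decomposeOption.symm ((none : Option α), σ)) = (σ.optionCongr : Perm (Option α)) := by
  rw [Equiv.Perm.decomposeOption_symm_apply]
  simp [Equiv.swap_self]
  rfl

theorem finSuccEquivLast_zero (m : ℕ) :
    finSuccEquivLast (0 : Fin (m+2)) = some (0 : Fin (m+1)) := by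
  rw [← Fin.castSucc_zero, finSuccEquivLast_castSucc]

theorem sum_perm_succ (m : ℕ) (x : ℝ) :
    SS (0 : Fin (m+2)) x = SS (some (0 : Fin (m+1)) : Option (Fin (m+1))) x := by
  unfold SS
  refine Fintype.sum_equiv (Equiv.permCongr finSuccEquivLast) _ _ ?_
  intro σ
  rw [← finSuccEquivLast_zero m, st_permCongr finSuccEquivLast (0 : Fin (m+2)) σ]

theorem TT_last (m : ℕ) (x : ℝ) :
    TT (0 : Fin (m+2)) (Fin.last (m+1)) x = SS (0 : Fin (m+1)) x := by
  unfold TT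
  have stepA : ∑ σ : Perm (Fin (m+2)), (if σ (Fin.last (m+1)) = Fin.last (m+1)
        then x ^ st (0 : Fin (m+2)) σ else 0)
      = ∑ τ : Perm (Option (Fin (m+1))),
        (if τ none = none then x ^ st (some (0 : Fin (m+1))) τ else 0) := by
    refine Fintype.sum_equiv (Equiv.permCongr finSuccEquivLast) _ _ ?_
    intro σ
    have happ : (Equiv.permCongr finSuccEquivLast σ) none = finSuccEquivLast (σ (Fin.last (m+1))) := by
      rw [Equiv.permCongr_apply, finSuccEquivLast_symm_none]
    have hcond : (Equiv.permCongr finSuccEquivLast σ) none = none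
        ↔ σ (Fin.last (m+1)) = Fin.last (m+1) := by
      rw [happ, ← finSuccEquivLast_last]
      exact EmbeddingLike.apply_eq_iff_eq finSuccEquivLast
    have hst : st (some (0 : Fin (m+1))) (Equiv.permCongr finSuccEquivLast σ)
        = st (0 : Fin (m+2)) σ := by
      rw [← finSuccEquivLast_zero m, st_permCongr]
    by_cases h : σ (Fin.last (m+1)) = Fin.last (m+1)
    · rw [if_pos h, if_pos (hcond.2 h), hst]
    · rw [if_neg h, if_neg (fun hh => h (hcond.1 hh))]
  rw [stepA]
  have stepB : ∑ τ : Perm (Option (Fin (m+1))),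
        (if τ none = none then x ^ st (some (0 : Fin (m+1))) τ else 0)
      = ∑ p : Option (Fin (m+1)) × Perm (Fin (m+1)),
        (if (Equiv.Perm.decomposeOption.symm p) none = none
          then x ^ st (some (0 : Fin (m+1))) (Equiv.Perm.decomposeOption.symm p) else 0) :=
    (Fintype.sum_equiv Equiv.Perm.decomposeOption.symm _ _ (fun p => rfl)).symm
  rw [stepB, Fintype.sum_prod_type, Fintype.sum_option]
  have hsome : ∀ (a : Fin (m+1)), ∑ σ : Perm (Fin (m+1)),
      (if (Equiv.Perm.decomposeOption.symm (some a, σ)) none = none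
        then x ^ st (some (0 : Fin (m+1))) (Equiv.Perm.decomposeOption.symm (some a, σ)) else 0) = 0 := by
    intro a
    apply Finset.sum_eq_zero
    intro σ _
    rw [if_neg]
    rw [Equiv.Perm.decomposeOption_symm_apply]
    rw [tau_apply_none]
    simp
  rw [Finset.sum_congr rfl (fun a _ => hsome a), Finset.sum_const, smul_zero, add_zero]
  apply Finset.sum_congr rfl
  intro σ _
  rw [decomposeOption_symm_none,
    if_pos (show (Equiv.optionCongr σ : Perm (Option (Fin (m+1)))) none = none from rfl),
    st_none_case]

theorem SS_one (x : ℝ) : SS (0 : Fin 1) x = 1 := by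
  unfold SS
  have h : ∀ σ : Perm (Fin 1), st (0 : Fin 1) σ = 0 := by
    intro σ
    have hσ : σ = 1 := by
      ext i
      rw [Subsingleton.elim (σ i) i]
      rfl
    subst hσ
    unfold st
    simp
  rw [Finset.sum_congr rfl (fun σ _ => by rw [h σ, pow_zero])]
  rw [Finset.sum_const, Finset.card_univ, Fintype.card_perm]
  simp

theorem SS_rec0 (x : ℝ) : SS (0 : Fin 2) x = (1 + x) * SS (0 : Fin 1) x := by
  rw [sum_perm_succ 0 x, master (0 : Fin 1) x]
  have h : ∑ a : Fin 1, (if a = 0 then 0 else TT (0 : Fin 1) a x) = 0 := by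
    apply Finset.sum_eq_zero
    intro a _
    rw [if_pos (Subsingleton.elim a 0)]
  rw [h, mul_zero, add_zero]
  norm_num

theorem SS_rec (m : ℕ) (x : ℝ) :
    SS (0 : Fin (m+3)) x = (1 + ((m+2 : ℕ) : ℝ) * x) * SS (0 : Fin (m+2)) x
      + (x^3 - x) * ((m+1 : ℕ) : ℝ) * SS (0 : Fin (m+1)) x := by
  rw [sum_perm_succ (m+1) x, master (0 : Fin (m+2)) x]
  have hlast : (Fin.last (m+1) : Fin (m+2)) ≠ 0 := by
    intro h
    have := congrArg Fin.val h
    simp [Fin.last] at this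
  rw [sum_TT (0 : Fin (m+2)) (Fin.last (m+1)) hlast x, TT_last m x]
  have hcard : (Fintype.card (Fin (m+2)) : ℝ) = ((m+2 : ℕ) : ℝ) := by
    rw [Fintype.card_fin]
  rw [hcard]
  push_cast
  ring

/-- right-hand side polynomial -/
def RR (n : ℕ) (x : ℝ) : ℝ :=
  ∑ i ∈ Finset.range n, ((n - 1).choose i : ℝ) * (1 - x ^ 2) ^ (n - 1 - i)
    * x ^ i * ∏ j ∈ Finset.Icc 1 i, (x + j)

theorem RR_one (x : ℝ) : RR 1 x = 1 := by
  unfold RR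
  simp

theorem choose_mul_sub (m i : ℕ) : m.choose i * (m - i) = m * (m - 1).choose i := by
  cases m with
  | zero =>
    cases i <;> simp
  | succ m' =>
    have h1 : (m' + 1) * m'.choose i = (m'+1).choose (i+1) * (i+1) :=
      (Nat.add_one_mul_choose_eq m' i)
    have h2 : (m'+1).choose (i+1) * (i+1) = (m'+1).choose i * (m' + 1 - i) :=
      Nat.choose_succ_right_eq (m'+1) i
    simp only [Nat.add_sub_cancel]
    omega

theorem RR_sum_form (n : ℕ) (x : ℝ) :
    RR (n+1) x = ∑ i ∈ Finset.range (n+1),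
      (n.choose i : ℝ) * (1 - x^2) ^ (n - i) * (x ^ i * ∏ j ∈ Finset.Icc 1 i, (x + j)) := by
  unfold RR
  apply Finset.sum_congr rfl
  intro i _
  simp only [Nat.add_sub_cancel]
  ring

theorem RR_two (x : ℝ) : RR 2 x = (1 + x) * RR 1 x := by
  rw [RR_one]
  unfold RR
  rw [Finset.sum_range_succ, Finset.sum_range_succ, Finset.sum_range_zero]
  norm_num
  ring

theorem RR_rec (m : ℕ) (x : ℝ) :
    RR (m+2) x = (1 + ((m+1 : ℕ) : ℝ) * x) * RR (m+1) x
      + (x^3 - x) * ((m : ℕ) : ℝ) * RR m x := by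
  cases m with
  | zero =>
    rw [RR_two]
    push_cast
    ring
  | succ m' =>
    set m : ℕ := m' + 1 with hm
    set A : ℝ := 1 - x^2 with hA
    set g : ℕ → ℝ := fun i => x ^ i * ∏ j ∈ Finset.Icc 1 i, (x + j) with hg
    set u : ℕ → ℝ := fun i => (m.choose i : ℝ) * A ^ (m - i) * g i with hu
    have hgsucc : ∀ i : ℕ, g (i+1) = x * (x + ((i+1 : ℕ) : ℝ)) * g i := by
      intro i
      rw [hg]
      simp only
      rw [Finset.prod_Icc_succ_top (Nat.one_le_iff_ne_zero.2 (Nat.succ_ne_zero i)), pow_succ]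
      push_cast
      ring
    have hRRm1 : RR (m+1) x = ∑ i ∈ Finset.range (m+1), u i := RR_sum_form m x
    have hRRm : RR m x = ∑ i ∈ Finset.range m, ((m-1).choose i : ℝ) * A ^ (m - 1 - i) * g i :=
      RR_sum_form m' x
    -- Key lemma: the (m-i)-weighted sum
    have hKey : ∑ i ∈ Finset.range (m+1), ((m - i : ℕ) : ℝ) * x * u i
        = x * (m : ℝ) * A * RR m x := by
      have h1 : ∀ i ∈ Finset.range (m+1), ((m - i : ℕ) : ℝ) * x * u i
          = (m : ℝ) * x * (((m-1).choose i : ℝ) * A ^ (m - i) * g i) := by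
        intro i _
        rw [hu]
        simp only
        have : ((m - i : ℕ) : ℝ) * ((m.choose i : ℝ) * A ^ (m-i) * g i)
            = ((m.choose i * (m - i) : ℕ) : ℝ) * A ^ (m-i) * g i := by
          push_cast
          ring
        calc ((m - i : ℕ) : ℝ) * x * ((m.choose i : ℝ) * A ^ (m - i) * g i)
            = x * (((m - i : ℕ) : ℝ) * ((m.choose i : ℝ) * A ^ (m-i) * g i)) := by ring
          _ = x * (((m.choose i * (m - i) : ℕ) : ℝ) * A ^ (m-i) * g i) := by rw [this]
          _ = x * (((m * (m-1).choose i : ℕ) : ℝ) * A ^ (m-i) * g i) := by rw [choose_mul_sub]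
          _ = (m : ℝ) * x * (((m-1).choose i : ℝ) * A ^ (m - i) * g i) := by push_cast; ring
      rw [Finset.sum_congr rfl h1, ← Finset.mul_sum]
      rw [Finset.sum_range_succ]
      have hlast : ((m-1).choose m : ℝ) = 0 := by
        rw [Nat.choose_eq_zero_of_lt (by omega)]
        simp
      rw [hlast]
      have hre : ∀ i ∈ Finset.range m, ((m-1).choose i : ℝ) * A ^ (m - i) * g i
          = A * (((m-1).choose i : ℝ) * A ^ (m - 1 - i) * g i) := by
        intro i hi
        have hi' : i < m := Finset.mem_range.1 hi
        have : m - i = (m - 1 - i) + 1 := by omega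
        rw [this, pow_succ]
        ring
      rw [zero_mul, zero_mul, add_zero, Finset.sum_congr rfl hre, ← Finset.mul_sum, ← hRRm]
      ring
    -- Expand RR (m+2)
    have hexp : RR (m+2) x = ∑ i ∈ Finset.range (m+1), (1 + ((i+1 : ℕ) : ℝ) * x) * u i := by
      have h0 : RR (m+2) x = ∑ i ∈ Finset.range (m+2),
          ((m+1).choose i : ℝ) * A ^ (m + 1 - i) * g i := RR_sum_form (m+1) x
      rw [h0, Finset.sum_range_succ' (fun i => ((m+1).choose i : ℝ) * A ^ (m + 1 - i) * g i) (m+1)]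
      have hsplit : ∀ i ∈ Finset.range (m+1),
          ((m+1).choose (i+1) : ℝ) * A ^ (m + 1 - (i+1)) * g (i+1)
            = (m.choose (i+1) : ℝ) * A ^ (m + 1 - (i+1)) * g (i+1)
              + (x^2 + ((i+1 : ℕ) : ℝ) * x) * u i := by
        intro i hi
        have hps : (m+1).choose (i+1) = m.choose i + m.choose (i+1) := Nat.choose_succ_succ m i
        have he : m + 1 - (i+1) = m - i := by omega
        rw [hps, he, hgsucc i, hu]
        simp only
        push_cast
        ring
      rw [Finset.sum_congr rfl hsplit, Finset.sum_add_distrib]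
      -- reassemble first part + corner term into A * RR(m+1)
      have hcorner : (((m+1).choose 0 : ℝ) * A ^ (m + 1 - 0) * g 0)
          = (m.choose 0 : ℝ) * A ^ (m + 1 - 0) * g 0 := by norm_num
      rw [hcorner]
      rw [add_right_comm]
      rw [← Finset.sum_range_succ' (fun i => (m.choose i : ℝ) * A ^ (m + 1 - i) * g i) (m+1)]
      rw [Finset.sum_range_succ (fun i => (m.choose i : ℝ) * A ^ (m + 1 - i) * g i) (m+1),
        Nat.choose_succ_self m]
      have hre2 : ∀ i ∈ Finset.range (m+1), (m.choose i : ℝ) * A ^ (m + 1 - i) * g i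
          = A * u i := by
        intro i hi
        have hi' : i < m + 1 := Finset.mem_range.1 hi
        have : m + 1 - i = (m - i) + 1 := by omega
        rw [this, pow_succ, hu]
        simp only
        ring
      rw [Finset.sum_congr rfl hre2]
      simp only [Nat.cast_zero, zero_mul, zero_mul, add_zero]
      rw [← Finset.sum_add_distrib]
      apply Finset.sum_congr rfl
      intro i _
      rw [hA]
      ring
    rw [hexp, hRRm1, Finset.mul_sum]
    have hfinal : ∀ i ∈ Finset.range (m+1), (1 + ((i+1 : ℕ) : ℝ) * x) * u i
        = (1 + ((m+1 : ℕ) : ℝ) * x) * u i - ((m - i : ℕ) : ℝ) * x * u i := by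
      intro i hi
      have hi' : i ≤ m := by
        have := Finset.mem_range.1 hi
        omega
      have hcast : ((m - i : ℕ) : ℝ) = (m : ℝ) - (i : ℝ) := by
        rw [Nat.cast_sub hi']
      rw [hcast]
      push_cast
      ring
    rw [Finset.sum_congr rfl hfinal, Finset.sum_sub_distrib, hKey]
    rw [hA]
    ring

theorem SS_eq_RR (x : ℝ) : ∀ m : ℕ, SS (0 : Fin (m+1)) x = RR (m+1) x := by
  have key : ∀ m : ℕ, SS (0 : Fin (m+1)) x = RR (m+1) x ∧ SS (0 : Fin (m+2)) x = RR (m+2) x := by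
    intro m
    induction m with
    | zero =>
      constructor
      · rw [SS_one, RR_one]
      · rw [SS_rec0, SS_one, RR_two, RR_one]
    | succ k ih =>
      refine ⟨ih.2, ?_⟩
      rw [SS_rec k x, ih.1, ih.2, RR_rec (k+1) x]
  exact fun m => (key m).1

theorem pexc_eq_st (m : ℕ) (π : Equiv.Perm (Fin (m+1))) : pexc π = st 0 π := by
  unfold pexc st c1 c2
  have hcond : (∀ i : Fin (m+1), (i : ℕ) = 0 → π i = i) ↔ π 0 = 0 := by
    constructor
    · intro h
      exact h 0 rfl
    · intro h i hi
      have hi0 : i = 0 := Fin.ext (by simpa using hi)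
      rw [hi0, h]
  have hsupp : (Finset.univ.filter fun i => π i = i).card + π.support.card = m + 1 := by
    have hs : π.support = Finset.univ.filter fun i => ¬ π i = i := by
      ext i
      simp [Equiv.Perm.mem_support]
    rw [hs, Finset.card_filter_add_card_filter_not (fun i => π i = i)]
    simp
  rw [if_congr hcond rfl rfl]
  omega

theorem pexc_bound (m : ℕ) (π : Equiv.Perm (Fin (m+1))) : pexc π ≤ 3 * m / 2 := by
  rw [pexc_eq_st]
  rw [Nat.le_div_iff_mul_le (by norm_num)]
  have h2c : 2 * π.cycleType.card ≤ π.support.card := by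
    have := Multiset.card_nsmul_le_sum (s := π.cycleType) (a := 2)
      (fun y hy => Equiv.Perm.two_le_of_mem_cycleType hy)
    rw [Equiv.Perm.sum_cycleType] at this
    simpa [smul_eq_mul, mul_comm] using this
  have hle : π.support.card ≤ m + 1 := by
    calc π.support.card ≤ Finset.univ.card := Finset.card_le_univ _
    _ = m + 1 := by simp
  unfold st
  by_cases h0 : π 0 = 0
  · rw [if_pos h0]
    have hle' : π.support.card ≤ m := by
      have hsub : π.support ⊆ Finset.univ.erase 0 := by
        intro i hi
        rw [Finset.mem_erase]
        refine ⟨?_, Finset.mem_univ i⟩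
        intro hi0
        subst hi0
        exact (Equiv.Perm.mem_support.1 hi) h0
      calc π.support.card ≤ (Finset.univ.erase (0 : Fin (m+1))).card := Finset.card_le_card hsub
      _ = m := by rw [Finset.card_erase_of_mem (Finset.mem_univ _)]; simp
    omega
  · rw [if_neg h0]
    have h2s := two_le_support_of_moved h0
    omega

theorem sum_x_pexc (m : ℕ) (x : ℝ) :
    ∑ π : Equiv.Perm (Fin (m+1)), x ^ pexc π = SS (0 : Fin (m+1)) x := by
  unfold SS
  apply Finset.sum_congr rfl
  intro π _
  rw [pexc_eq_st]


theorem stmt10 (n : ℕ) (hn : 1 ≤ n) (x : ℝ) :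
    ∑ k ∈ Finset.range (3 * (n - 1) / 2 + 1), (W n k : ℝ) * x ^ k =
      ∑ i ∈ Finset.range n, ((n - 1).choose i : ℝ) * (1 - x ^ 2) ^ (n - 1 - i)
        * x ^ i * ∏ j ∈ Finset.Icc 1 i, (x + j) := by
  obtain ⟨m, rfl⟩ : ∃ m, n = m + 1 := ⟨n - 1, by omega⟩
  have hRHS : ∑ i ∈ Finset.range (m+1), (((m+1) - 1).choose i : ℝ) * (1 - x ^ 2) ^ ((m+1) - 1 - i)
      * x ^ i * ∏ j ∈ Finset.Icc 1 i, (x + j) = RR (m+1) x := rfl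
  rw [hRHS, ← SS_eq_RR x m, ← sum_x_pexc m x]
  have hmaps : ∀ π : Equiv.Perm (Fin (m+1)), π ∈ Finset.univ →
      pexc π ∈ Finset.range (3 * ((m+1) - 1) / 2 + 1) := by
    intro π _
    rw [Finset.mem_range]
    have := pexc_bound m π
    simpa using Nat.lt_succ_of_le this
  have hfib := Finset.sum_fiberwise_of_maps_to hmaps (fun π => x ^ pexc π)
  rw [← hfib]
  apply Finset.sum_congr rfl
  intro k hk
  have hterm : ∀ π ∈ Finset.univ.filter (fun π : Equiv.Perm (Fin (m+1)) => pexc π = k),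
      x ^ pexc π = x ^ k := by
    intro π hπ
    rw [(Finset.mem_filter.1 hπ).2]
  rw [Finset.sum_congr rfl hterm, Finset.sum_const, nsmul_eq_mul]
  rfl
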